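/- arXiv:2301.09325 — 8 statements merged into one kernel-verified Lean document; each statement's English description precedes it below -/
import Mathlib

section
/- Let F be a permutation of F_{p^n} and c ∈ F_{p^n}^×. Then for every a, b ∈ F_{p^n}, the number of solutions x of F(cx+a) − cF(x) = b equals the number of solutions y of F^{-1}(cy+b) − cF^{-1}(y) = a. Consequently, the cc-differential uniformity of F equals that of F^{-1}; in particular if F is PccN (resp. APccN) then so is F^{-1}. -/
/-- for a permutation F, the cc-difference count of F at (a,b) equals that of
F⁻¹ at (b,a); consequently F and F⁻¹ have the same cc-differential uniformity. -/
theorem cc_diff_uniformity_inverse (p : ℕ) (hp : p.Prime) (n : ℕ) (hn : 0 < n)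
    (K : Type) [Field K] [Fintype K] (hK : Fintype.card K = p ^ n)
    (c : K) (hc : c ≠ 0) (F G : K → K)
    (hGF : Function.LeftInverse G F) (hFG : Function.RightInverse G F) :
    (∀ a b : K, Nat.card {x : K // F (c * x + a) - c * F x = b} =
      Nat.card {y : K // G (c * y + b) - c * G y = a}) ∧
    sSup {m : ℕ | ∃ a b : K, (c = 1 → a ≠ 0) ∧
        m = Nat.card {x : K // F (c * x + a) - c * F x = b}} =
    sSup {m : ℕ | ∃ a b : K, (c = 1 → a ≠ 0) ∧
        m = Nat.card {x : K // G (c * x + a) - c * G x = b}} := by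
  have injF : Function.Injective F := hGF.injective
  have injG : Function.Injective G := hFG.injective
  -- key count equality, proved symmetrically for any (F', G') pair of mutual inverses
  have key : ∀ a b : K, Nat.card {x : K // F (c * x + a) - c * F x = b} =
      Nat.card {y : K // G (c * y + b) - c * G y = a} := by
    intro a b
    apply Nat.card_congr
    refine ⟨fun x => ⟨F x.1, ?_⟩, fun y => ⟨G y.1, ?_⟩, ?_, ?_⟩
    · obtain ⟨x, hx⟩ := x
      have h1 : c * F x + b = F (c * x + a) := by rw [← hx]; ring
      simp only [h1, hGF (c * x + a), hGF x]
      ring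
    · obtain ⟨y, hy⟩ := y
      have h1 : c * G y + a = G (c * y + b) := by rw [← hy]; ring
      simp only [h1, hFG (c * y + b), hFG y]
      ring
    · intro x; exact Subtype.ext (hGF x.1)
    · intro y; exact Subtype.ext (hFG y.1)
  refine ⟨key, ?_⟩
  -- counts are 0 when c = 1, b = 0, a ≠ 0, for an injective function
  have hzero : ∀ (H : K → K), Function.Injective H → ∀ a : K, a ≠ 0 →
      Nat.card {x : K // H (1 * x + a) - 1 * H x = 0} = 0 := by
    intro H hH a ha
    rw [Nat.card_eq_zero]
    left
    constructor
    rintro ⟨x, hx⟩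
    rw [one_mul, one_mul, sub_eq_zero] at hx
    exact ha (add_eq_left.mp (hH hx))
  have hzero' : ∀ (H : K → K), Function.Injective H → ∀ a : K, a ≠ 0 →
      Nat.card {x : K // H (1 * x + a) - 1 * H x = 0} = 0 := hzero
  have subset : ∀ (F' G' : K → K), Function.Injective F' → Function.Injective G' →
      (∀ a b : K, Nat.card {x : K // F' (c * x + a) - c * F' x = b} =
        Nat.card {y : K // G' (c * y + b) - c * G' y = a}) →
      {m : ℕ | ∃ a b : K, (c = 1 → a ≠ 0) ∧
        m = Nat.card {x : K // F' (c * x + a) - c * F' x = b}} ⊆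
      {m : ℕ | ∃ a b : K, (c = 1 → a ≠ 0) ∧
        m = Nat.card {x : K // G' (c * x + a) - c * G' x = b}} := by
    rintro F' G' hF' hG' hkey m ⟨a, b, h1, h2⟩
    by_cases hc1 : c = 1
    · subst hc1
      by_cases hb : b = 0
      · subst hb
        refine ⟨1, 0, fun _ => one_ne_zero, ?_⟩
        rw [h2, hzero F' hF' a (h1 rfl), hzero G' hG' 1 one_ne_zero]
      · exact ⟨b, a, fun _ => hb, by rw [h2, hkey a b]⟩
    · exact ⟨b, a, fun h => absurd h hc1, by rw [h2, hkey a b]⟩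
  have hseteq : {m : ℕ | ∃ a b : K, (c = 1 → a ≠ 0) ∧
        m = Nat.card {x : K // F (c * x + a) - c * F x = b}} =
      {m : ℕ | ∃ a b : K, (c = 1 → a ≠ 0) ∧
        m = Nat.card {x : K // G (c * x + a) - c * G x = b}} := by
    apply Set.Subset.antisymm
    · exact subset F G injF injG key
    · exact subset G F injG injF (fun a b => (key b a).symm)
  rw [hseteq]
end

section
/- Let F, H : F_{p^n} → F_{p^s} be c-CCZ equivalent, i.e., there is a bijective F_p-linear map φ on F_{p^n} × F_{p^s} with φ(cX) = cφ(X) for all X, and a point X₀, such that the graph of F equals φ(graph of H) + X₀. Then F and H have the same cc-differential spectrum and the same cc-differential uniformity. -/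
private lemma inj_core {K L F0 : Type} [Field K] [Field L] [Field F0]
    (ι : F0 →+* K) (κ : F0 →+* L) (c : F0)
    (F H : K → L) (φ : K × L → K × L) (hinj : Function.Injective φ)
    (hφadd : ∀ X Y : K × L, φ (X + Y) = φ X + φ Y)
    (hφc : ∀ X : K × L, φ (ι c * X.1, κ c * X.2) = (ι c * (φ X).1, κ c * (φ X).2))
    (X₀ : K × L)
    (hgraph : {P : K × L | P.2 = F P.1} = (fun X => φ X + X₀) '' {P : K × L | P.2 = H P.1})
    (a a' : K) (b b' : L)
    (hrel : ((a, b) : K × L) = φ (a', b') + X₀ - (ι c * X₀.1, κ c * X₀.2)) :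
    ∃ f : {x : K // H (ι c * x + a') - κ c * H x = b'} →
        {x : K // F (ι c * x + a) - κ c * F x = b}, Function.Injective f := by
  have hmem : ∀ x : K, (φ (x, H x)).2 + X₀.2 = F ((φ (x, H x)).1 + X₀.1) := by
    intro x
    have h1 : (φ (x, H x) + X₀) ∈ {P : K × L | P.2 = F P.1} := by
      rw [hgraph]; exact ⟨(x, H x), rfl, rfl⟩
    simpa using h1
  have ha : a = (φ (a', b')).1 + X₀.1 - ι c * X₀.1 := by
    have := congrArg Prod.fst hrel; simpa using this
  have hb : b = (φ (a', b')).2 + X₀.2 - κ c * X₀.2 := by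
    have := congrArg Prod.snd hrel; simpa using this
  have hsol : ∀ x : K, H (ι c * x + a') - κ c * H x = b' →
      F (ι c * ((φ (x, H x)).1 + X₀.1) + a) - κ c * F ((φ (x, H x)).1 + X₀.1) = b := by
    intro x hx
    have hQ : φ (ι c * x + a', H (ι c * x + a'))
        = (ι c * (φ (x, H x)).1, κ c * (φ (x, H x)).2) + φ (a', b') := by
      have h2 : ((ι c * x + a', H (ι c * x + a')) : K × L) = (ι c * x, κ c * H x) + (a', b') := by
        have h3 : H (ι c * x + a') = κ c * H x + b' := by linear_combination hx
        simp [Prod.ext_iff, h3]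
      rw [h2, hφadd, hφc (x, H x)]
    have h3 : ι c * ((φ (x, H x)).1 + X₀.1) + a
        = (φ (ι c * x + a', H (ι c * x + a'))).1 + X₀.1 := by
      rw [hQ]; simp only [Prod.fst_add]; rw [ha]; ring
    rw [h3, ← hmem (ι c * x + a'), hQ, ← hmem x]
    simp only [Prod.snd_add]
    rw [hb]; ring
  refine ⟨fun x => ⟨(φ (x.1, H x.1)).1 + X₀.1, hsol x.1 x.2⟩, ?_⟩
  intro x y hxy
  have h4' : (φ ((x.1 : K), H x.1)).1 + X₀.1 = (φ ((y.1 : K), H y.1)).1 + X₀.1 :=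
    congrArg Subtype.val hxy
  have h4 : (φ ((x.1 : K), H x.1)).1 = (φ ((y.1 : K), H y.1)).1 := add_right_cancel h4'
  have h5 : φ ((x.1 : K), H x.1) = φ (y.1, H y.1) := by
    have e2 : (φ ((x.1 : K), H x.1)).2 = (φ ((y.1 : K), H y.1)).2 := by
      have hx2 := hmem x.1
      have hy2 := hmem y.1
      rw [h4] at hx2
      exact add_right_cancel (hx2.trans hy2.symm)
    exact Prod.ext h4 e2
  have h6 := hinj h5
  exact Subtype.ext (congrArg Prod.fst h6)

private lemma deg_card {K L F0 : Type} [Field K] [Field L] [Field F0]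
    (ι : F0 →+* K) (κ : F0 →+* L) (c : F0) (hc1 : c = 1)
    (G : K → L) (b : L) (hb : b ≠ 0) :
    Nat.card {x : K // G (ι c * x + (0 : K)) - κ c * G x = b} = 0 := by
  subst hc1
  have he : IsEmpty {x : K // G (ι 1 * x + (0 : K)) - κ 1 * G x = b} := by
    refine ⟨fun x => hb ?_⟩
    have hx := x.2
    simp only [map_one, one_mul, add_zero, sub_self] at hx
    exact hx.symm
  exact Nat.card_of_isEmpty

/-- c-CCZ equivalent functions have the same cc-differential spectrum and
the same cc-differential uniformity. -/
theorem cCCZ_preserves_cc_spectrum (p n s : ℕ) (hp : p.Prime) (hn : 0 < n) (hs : 0 < s)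
    (K L F0 : Type) [Field K] [Fintype K] [Field L] [Fintype L] [Field F0] [Fintype F0]
    (hK : Fintype.card K = p ^ n) (hL : Fintype.card L = p ^ s)
    (hF0 : Fintype.card F0 = p ^ (Nat.gcd n s))
    (ι : F0 →+* K) (κ : F0 →+* L) (c : F0) (hc : c ≠ 0)
    (F H : K → L)
    (φ : K × L → K × L) (hφbij : Function.Bijective φ)
    (hφadd : ∀ X Y : K × L, φ (X + Y) = φ X + φ Y)
    (hφc : ∀ X : K × L, φ (ι c * X.1, κ c * X.2) = (ι c * (φ X).1, κ c * (φ X).2))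
    (X₀ : K × L)
    (hgraph : {P : K × L | P.2 = F P.1} = (fun X => φ X + X₀) '' {P : K × L | P.2 = H P.1}) :
    ({m : ℕ | ∃ (a : K) (b : L),
        m = Nat.card {x : K // F (ι c * x + a) - κ c * F x = b}} =
     {m : ℕ | ∃ (a : K) (b : L),
        m = Nat.card {x : K // H (ι c * x + a) - κ c * H x = b}}) ∧
    sSup {m : ℕ | ∃ (a : K) (b : L), (c = 1 → a ≠ 0) ∧
        m = Nat.card {x : K // F (ι c * x + a) - κ c * F x = b}} =
    sSup {m : ℕ | ∃ (a : K) (b : L), (c = 1 → a ≠ 0) ∧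
        m = Nat.card {x : K // H (ι c * x + a) - κ c * H x = b}} := by
  classical
  set e : (K × L) ≃ (K × L) := Equiv.ofBijective φ hφbij with he
  have happ : ∀ X : K × L, φ (e.symm X) = X := fun X => e.apply_symm_apply X
  have h0 : φ 0 = 0 := by
    have h := hφadd 0 0
    rw [add_zero] at h
    exact (add_eq_left.mp h.symm)
  have hsadd : ∀ X Y : K × L, e.symm (X + Y) = e.symm X + e.symm Y := by
    intro X Y
    apply hφbij.1
    rw [happ, hφadd, happ, happ]
  have hs0 : e.symm 0 = 0 := by
    apply hφbij.1
    rw [happ, h0]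
  have hsneg : ∀ X : K × L, e.symm (-X) = -e.symm X := by
    intro X
    have h := hsadd X (-X)
    rw [add_neg_cancel, hs0] at h
    exact eq_neg_of_add_eq_zero_right h.symm
  have hsc : ∀ X : K × L,
      e.symm (ι c * X.1, κ c * X.2) = (ι c * (e.symm X).1, κ c * (e.symm X).2) := by
    intro X
    apply hφbij.1
    rw [happ, hφc (e.symm X), happ]
  have hcsneg : ∀ Z : K × L,
      ((ι c * (-Z).1, κ c * (-Z).2) : K × L) = -(ι c * Z.1, κ c * Z.2) := by
    intro Z
    simp [Prod.ext_iff, mul_neg]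
  -- the swapped graph equation
  have hgraph' : {P : K × L | P.2 = H P.1} =
      (fun X => e.symm X + e.symm (-X₀)) '' {P : K × L | P.2 = F P.1} := by
    ext P
    simp only [Set.mem_setOf_eq, Set.mem_image]
    constructor
    · intro hP
      refine ⟨φ P + X₀, ?_, ?_⟩
      · have : (φ P + X₀) ∈ {Q : K × L | Q.2 = F Q.1} := by
          rw [hgraph]; exact ⟨P, hP, rfl⟩
        exact this
      · rw [← hsadd]
        have h1 : φ P + X₀ + -X₀ = φ P := by abel
        rw [h1]
        exact e.symm_apply_apply P
    · rintro ⟨Q, hQ, rfl⟩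
      have hQ' : Q ∈ {P : K × L | P.2 = F P.1} := hQ
      rw [hgraph] at hQ'
      obtain ⟨U, hU, hUQ⟩ := hQ'
      have hUQ' : φ U + X₀ = Q := hUQ
      have h2 : e.symm Q + e.symm (-X₀) = U := by
        rw [← hsadd]
        have h1 : Q + -X₀ = φ U := by rw [← hUQ']; abel
        rw [h1]
        exact e.symm_apply_apply U
      rw [h2]
      exact hU
  -- main correspondence
  have main : ∀ (a : K) (b : L), ∃ (a' : K) (b' : L),
      ((a, b) : K × L) = φ (a', b') + X₀ - (ι c * X₀.1, κ c * X₀.2) ∧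
      Nat.card {x : K // F (ι c * x + a) - κ c * F x = b}
        = Nat.card {x : K // H (ι c * x + a') - κ c * H x = b'} := by
    intro a b
    set A := e.symm ((a, b) + (ι c * X₀.1, κ c * X₀.2) - X₀) with hA
    refine ⟨A.1, A.2, ?_, ?_⟩
    · rw [Prod.mk.eta, hA, happ]
      abel
    · have hrel1 : ((a, b) : K × L) = φ (A.1, A.2) + X₀ - (ι c * X₀.1, κ c * X₀.2) := by
        rw [Prod.mk.eta, hA, happ]
        abel
      obtain ⟨f, hf⟩ := inj_core ι κ c F H φ hφbij.1 hφadd hφc X₀ hgraph a A.1 b A.2 hrel1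
      have hrel2 : ((A.1, A.2) : K × L) = e.symm (a, b) + e.symm (-X₀)
          - (ι c * (e.symm (-X₀)).1, κ c * (e.symm (-X₀)).2) := by
        rw [Prod.mk.eta, hA, hsneg]
        have hl : (a, b) + (ι c * X₀.1, κ c * X₀.2) - X₀
            = (a, b) + ((ι c * X₀.1, κ c * X₀.2) + (-X₀)) := by abel
        rw [hl, hsadd, hsadd, hsneg, hsc X₀, hcsneg (e.symm X₀)]
        abel
      obtain ⟨g, hg⟩ := inj_core ι κ c H F (⇑e.symm) e.symm.injective hsadd hsc
        (e.symm (-X₀)) hgraph' A.1 a A.2 b hrel2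
      exact le_antisymm (Nat.card_le_card_of_injective g hg)
        (Nat.card_le_card_of_injective f hf)
  -- nonvanishing transfer for c = 1
  have hpair : c = 1 → ∀ (a : K) (b : L) (a' : K) (b' : L),
      ((a, b) : K × L) = φ (a', b') + X₀ - (ι c * X₀.1, κ c * X₀.2) →
      (((a, b) : K × L) = 0 ↔ ((a', b') : K × L) = 0) := by
    intro h1 a b a' b' hrel
    have hcs : ((ι c * X₀.1, κ c * X₀.2) : K × L) = X₀ := by
      subst h1; simp
    rw [hcs] at hrel
    have hthis : ((a, b) : K × L) = φ (a', b') := by rw [hrel]; abel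
    constructor
    · intro hz
      apply hφbij.1
      rw [h0, ← hthis]
      exact hz
    · intro hz
      rw [hthis, hz, h0]
  constructor
  · ext m
    simp only [Set.mem_setOf_eq]
    constructor
    · rintro ⟨a, b, hm⟩
      obtain ⟨a', b', _, hcard⟩ := main a b
      exact ⟨a', b', hm.trans hcard⟩
    · rintro ⟨a', b', hm⟩
      obtain ⟨a2, b2, hrel2, hcard2⟩ :=
        main (φ (a', b') + X₀ - (ι c * X₀.1, κ c * X₀.2)).1
             (φ (a', b') + X₀ - (ι c * X₀.1, κ c * X₀.2)).2
      rw [Prod.mk.eta] at hrel2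
      have h6 : φ (a2, b2) + X₀ - (ι c * X₀.1, κ c * X₀.2)
          = φ (a', b') + X₀ - (ι c * X₀.1, κ c * X₀.2) := hrel2.symm
      have h7 : φ (a2, b2) = φ (a', b') := by
        have h8 := sub_left_inj.mp h6
        exact add_right_cancel h8
      have h9 := hφbij.1 h7
      have ha2 : a2 = a' := congrArg Prod.fst h9
      have hb2 : b2 = b' := congrArg Prod.snd h9
      rw [ha2, hb2] at hcard2
      exact ⟨_, _, hm.trans hcard2.symm⟩
  · have hbound : ∀ (G : K → L) (a : K) (b : L),
        Nat.card {x : K // G (ι c * x + a) - κ c * G x = b} ≤ Fintype.card K := by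
      intro G a b
      calc Nat.card {x : K // G (ι c * x + a) - κ c * G x = b} ≤ Nat.card K :=
            Nat.card_le_card_of_injective _ Subtype.val_injective
        _ = Fintype.card K := Nat.card_eq_fintype_card
    have hbddF : BddAbove {m : ℕ | ∃ (a : K) (b : L), (c = 1 → a ≠ 0) ∧
        m = Nat.card {x : K // F (ι c * x + a) - κ c * F x = b}} := by
      refine ⟨Fintype.card K, ?_⟩
      rintro m ⟨a, b, -, rfl⟩
      exact hbound F a b
    have hbddH : BddAbove {m : ℕ | ∃ (a : K) (b : L), (c = 1 → a ≠ 0) ∧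
        m = Nat.card {x : K // H (ι c * x + a) - κ c * H x = b}} := by
      refine ⟨Fintype.card K, ?_⟩
      rintro m ⟨a, b, -, rfl⟩
      exact hbound H a b
    obtain ⟨a₀, ha₀⟩ : ∃ a : K, a ≠ 0 := by
      have h1 : 1 < Fintype.card K := by
        rw [hK]; exact Nat.one_lt_pow hn.ne' hp.one_lt
      have : Nontrivial K := Fintype.one_lt_card_iff_nontrivial.mp h1
      exact exists_ne 0
    have hneF : Set.Nonempty {m : ℕ | ∃ (a : K) (b : L), (c = 1 → a ≠ 0) ∧
        m = Nat.card {x : K // F (ι c * x + a) - κ c * F x = b}} :=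
      ⟨_, a₀, 0, fun _ => ha₀, rfl⟩
    have hneH : Set.Nonempty {m : ℕ | ∃ (a : K) (b : L), (c = 1 → a ≠ 0) ∧
        m = Nat.card {x : K // H (ι c * x + a) - κ c * H x = b}} :=
      ⟨_, a₀, 0, fun _ => ha₀, rfl⟩
    apply le_antisymm
    · apply csSup_le hneF
      rintro m ⟨a, b, hcon, rfl⟩
      obtain ⟨a', b', hrel, hcard⟩ := main a b
      rw [hcard]
      by_cases h1 : c = 1
      · by_cases ha' : a' = 0
        · have hab : ((a, b) : K × L) ≠ 0 := fun h =>
            (hcon h1) ((Prod.mk_eq_zero.mp h).1)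
          have hab' : ((a', b') : K × L) ≠ 0 := fun h =>
            hab ((hpair h1 a b a' b' hrel).mpr h)
          have hb' : b' ≠ 0 := fun h => hab' (Prod.mk_eq_zero.mpr ⟨ha', h⟩)
          rw [ha', deg_card ι κ c h1 H b' hb']
          exact Nat.zero_le _
        · exact le_csSup hbddH ⟨a', b', fun _ => ha', rfl⟩
      · exact le_csSup hbddH ⟨a', b', fun h => absurd h h1, rfl⟩
    · apply csSup_le hneH
      rintro m ⟨a', b', hcon, rfl⟩
      obtain ⟨a2, b2, hrel2, hcard2⟩ :=
        main (φ (a', b') + X₀ - (ι c * X₀.1, κ c * X₀.2)).1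
             (φ (a', b') + X₀ - (ι c * X₀.1, κ c * X₀.2)).2
      rw [Prod.mk.eta] at hrel2
      have h6 : φ (a2, b2) + X₀ - (ι c * X₀.1, κ c * X₀.2)
          = φ (a', b') + X₀ - (ι c * X₀.1, κ c * X₀.2) := hrel2.symm
      have h7 : φ (a2, b2) = φ (a', b') := by
        have h8 := sub_left_inj.mp h6
        exact add_right_cancel h8
      have h9 := hφbij.1 h7
      have ha2 : a2 = a' := congrArg Prod.fst h9
      have hb2 : b2 = b' := congrArg Prod.snd h9
      rw [ha2, hb2] at hcard2
      rw [← hcard2]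
      set W := φ (a', b') + X₀ - (ι c * X₀.1, κ c * X₀.2) with hW
      by_cases h1 : c = 1
      · by_cases hW1 : W.1 = 0
        · have hab' : ((a', b') : K × L) ≠ 0 := fun h =>
            (hcon h1) ((Prod.mk_eq_zero.mp h).1)
          have hrelW : ((W.1, W.2) : K × L)
              = φ (a', b') + X₀ - (ι c * X₀.1, κ c * X₀.2) := by
            rw [Prod.mk.eta]
          have hab : ((W.1, W.2) : K × L) ≠ 0 := fun h =>
            hab' ((hpair h1 W.1 W.2 a' b' hrelW).mp h)
          have hb : W.2 ≠ 0 := fun h => hab (Prod.mk_eq_zero.mpr ⟨hW1, h⟩)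
          rw [hW1, deg_card ι κ c h1 F W.2 hb]
          exact Nat.zero_le _
        · exact le_csSup hbddF ⟨W.1, W.2, fun _ => hW1, rfl⟩
      · exact le_csSup hbddF ⟨W.1, W.2, fun h => absurd h h1, rfl⟩
end

section
/- If F, F' : F_{p^n} → F_{p^s} are c-EA equivalent (F' = A₁ ∘ F ∘ A₂ + A₃ with A₁, A₂ c-affine permutations and A₃ a c-affine function), then F and F' are c-CCZ equivalent, i.e., there exists a c-affine permutation of F_{p^n} × F_{p^s} mapping the graph of F onto the graph of F'. -/
/-- c-EA equivalence implies c-CCZ equivalence. -/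
theorem cEA_implies_cCCZ (p n s : ℕ) (hp : p.Prime) (hn : 0 < n) (hs : 0 < s)
    (K L F0 : Type) [Field K] [Fintype K] [Field L] [Fintype L] [Field F0] [Fintype F0]
    (hK : Fintype.card K = p ^ n) (hL : Fintype.card L = p ^ s)
    (hF0 : Fintype.card F0 = p ^ (Nat.gcd n s))
    (ι : F0 →+* K) (κ : F0 →+* L) (c : F0) (hc : c ≠ 0)
    (F F' : K → L)
    (A₁ : L → L) (hA₁bij : Function.Bijective A₁)
    (hA₁add : ∀ x y : L, A₁ (x + y) - A₁ 0 = (A₁ x - A₁ 0) + (A₁ y - A₁ 0))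
    (hA₁c : ∀ x : L, A₁ (κ c * x) - A₁ 0 = κ c * (A₁ x - A₁ 0))
    (A₂ : K → K) (hA₂bij : Function.Bijective A₂)
    (hA₂add : ∀ x y : K, A₂ (x + y) - A₂ 0 = (A₂ x - A₂ 0) + (A₂ y - A₂ 0))
    (hA₂c : ∀ x : K, A₂ (ι c * x) - A₂ 0 = ι c * (A₂ x - A₂ 0))
    (A₃ : K → L)
    (hA₃add : ∀ x y : K, A₃ (x + y) - A₃ 0 = (A₃ x - A₃ 0) + (A₃ y - A₃ 0))
    (hA₃c : ∀ x : K, A₃ (ι c * x) - A₃ 0 = κ c * (A₃ x - A₃ 0))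
    (hF' : ∀ x : K, F' x = A₁ (F (A₂ x)) + A₃ x) :
    ∃ 𝒜 : K × L → K × L, Function.Bijective 𝒜 ∧
      (∀ X Y : K × L, 𝒜 (X + Y) - 𝒜 0 = (𝒜 X - 𝒜 0) + (𝒜 Y - 𝒜 0)) ∧
      (∀ X : K × L, 𝒜 (ι c * X.1, κ c * X.2) - 𝒜 0 =
        (ι c * (𝒜 X - 𝒜 0).1, κ c * (𝒜 X - 𝒜 0).2)) ∧
      𝒜 '' {P : K × L | P.2 = F P.1} = {P : K × L | P.2 = F' P.1} := by
  classical
  set e₁ := Equiv.ofBijective A₁ hA₁bij with he₁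
  set e₂ := Equiv.ofBijective A₂ hA₂bij with he₂
  set B : K → K := fun u => e₂.symm u with hB
  have hAB : ∀ u, A₂ (B u) = u := fun u => e₂.apply_symm_apply u
  have hBA : ∀ x, B (A₂ x) = x := fun x => e₂.symm_apply_apply x
  -- linear parts
  have hL₂inj : Function.Injective (fun x => A₂ x - A₂ 0) := by
    intro a b h
    exact hA₂bij.1 (by simpa using sub_left_injective h)
  -- M = linear part of B
  set M : K → K := fun u => B u - B 0 with hM
  have hL₂M : ∀ u, A₂ (B u) - A₂ 0 = u - A₂ 0 := fun u => by rw [hAB]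
  have hMadd : ∀ u v, M (u + v) = M u + M v := by
    intro u v
    apply hL₂inj
    show A₂ (M (u+v)) - A₂ 0 = A₂ (M u + M v) - A₂ 0
    have h1 : ∀ a b : K, A₂ (a - b) - A₂ 0 = (A₂ a - A₂ 0) - (A₂ b - A₂ 0) := by
      intro a b
      have := hA₂add (a - b) b
      simp only [sub_add_cancel] at this
      linear_combination -this
    rw [hA₂add (M u) (M v)]
    simp only [hM, h1, hL₂M]
    ring
  have hMc : ∀ u, M (ι c * u) = ι c * M u := by
    intro u
    apply hL₂inj
    show A₂ (M (ι c * u)) - A₂ 0 = A₂ (ι c * M u) - A₂ 0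
    have h1 : ∀ a b : K, A₂ (a - b) - A₂ 0 = (A₂ a - A₂ 0) - (A₂ b - A₂ 0) := by
      intro a b
      have := hA₂add (a - b) b
      simp only [sub_add_cancel] at this
      linear_combination -this
    rw [hA₂c (M u)]
    simp only [hM, h1, hL₂M]
    ring
  have hBdecomp : ∀ u, B u = M u + B 0 := fun u => by simp [hM]
  -- A₃ is affine: A₃ x - A₃ y = L₃ (x - y)
  have hA₃sub : ∀ x y : K, A₃ x - A₃ y = (A₃ (x - y) - A₃ 0) := by
    intro x y
    have := hA₃add (x - y) y
    simp only [sub_add_cancel] at this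
    linear_combination this
  -- the CCZ map
  refine ⟨fun P => (B P.1, A₁ P.2 + A₃ (B P.1)), ?_, ?_, ?_, ?_⟩
  · -- bijective
    have : Function.Bijective (fun P : K × L => (B P.1, A₁ P.2 + A₃ (B P.1))) := by
      apply Function.bijective_iff_has_inverse.2
      refine ⟨fun Q => (A₂ Q.1, e₁.symm (Q.2 - A₃ Q.1)), ?_, ?_⟩
      · intro P
        have h2 : A₁ P.2 + A₃ (B P.1) - A₃ (B P.1) = A₁ P.2 := by ring
        simp [hAB, h2, he₁]
      · intro Q
        have h1 : A₂ Q.1 = A₂ Q.1 := rfl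
        have h2 : (e₁ : L → L) = A₁ := rfl
        simp only [hBA]
        rw [show A₁ ((e₁.symm) (Q.2 - A₃ Q.1)) = e₁ (e₁.symm (Q.2 - A₃ Q.1)) from rfl,
          e₁.apply_symm_apply]
        simp
    exact this
  · -- additivity
    intro X Y
    have hfst : B (X.1 + Y.1) - B 0 = (B X.1 - B 0) + (B Y.1 - B 0) := by
      have := hMadd X.1 Y.1
      simpa [hM] using this
    have hsnd : (A₁ (X.2 + Y.2) + A₃ (B (X.1 + Y.1))) - (A₁ 0 + A₃ (B 0)) =
        ((A₁ X.2 + A₃ (B X.1)) - (A₁ 0 + A₃ (B 0))) +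
        ((A₁ Y.2 + A₃ (B Y.1)) - (A₁ 0 + A₃ (B 0))) := by
      have h1 := hA₁add X.2 Y.2
      have h2 : A₃ (B (X.1 + Y.1)) - A₃ (B 0) =
          (A₃ (B X.1) - A₃ (B 0)) + (A₃ (B Y.1) - A₃ (B 0)) := by
        rw [hA₃sub (B (X.1+Y.1)) (B 0), hA₃sub (B X.1) (B 0), hA₃sub (B Y.1) (B 0)]
        have : B (X.1 + Y.1) - B 0 = (B X.1 - B 0) + (B Y.1 - B 0) := hfst
        rw [this]
        exact hA₃add _ _
      linear_combination h1 + h2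
    exact Prod.ext (by simpa using hfst) (by simpa using hsnd)
  · -- c-linearity
    intro X
    have hfst : B (ι c * X.1) - B 0 = ι c * (B X.1 - B 0) := by
      have := hMc X.1
      simpa [hM] using this
    have hsnd : (A₁ (κ c * X.2) + A₃ (B (ι c * X.1))) - (A₁ 0 + A₃ (B 0)) =
        κ c * ((A₁ X.2 + A₃ (B X.1)) - (A₁ 0 + A₃ (B 0))) := by
      have h1 := hA₁c X.2
      have h2 : A₃ (B (ι c * X.1)) - A₃ (B 0) = κ c * (A₃ (B X.1) - A₃ (B 0)) := by
        rw [hA₃sub (B (ι c * X.1)) (B 0), hA₃sub (B X.1) (B 0), hfst]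
        exact hA₃c _
      linear_combination h1 + h2
    exact Prod.ext (by simpa using hfst) (by simpa using hsnd)
  · -- graph
    ext Q
    simp only [Set.mem_image, Set.mem_setOf_eq]
    constructor
    · rintro ⟨P, hP, rfl⟩
      show A₁ P.2 + A₃ (B P.1) = F' (B P.1)
      rw [hF', hAB, ← hP]
    · intro hQ
      refine ⟨(A₂ Q.1, F (A₂ Q.1)), rfl, ?_⟩
      have : (B (A₂ Q.1), A₁ (F (A₂ Q.1)) + A₃ (B (A₂ Q.1))) = (Q.1, Q.2) := by
        rw [hBA, hQ, hF']
      simpa using this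
end

section
/- Let F, F' : F_{p^n} → F_{p^s} with F' = A₁ ∘ F ∘ A₂, where A₁ : F_{p^s} → F_{p^s} is a c-affine permutation and A₂ : F_{p^n} → F_{p^n} is an affine permutation. Then for every a ∈ F_{p^n}, b ∈ F_{p^s}, the maximum over (a,b) (with a ≠ 0 if c = 1) of #{x : F'(x+a) − cF'(x) = b} equals the corresponding maximum for F; i.e., F and F' have equal c-differential uniformity. -/
/-- c1-equivalent functions (F' = A₁ ∘ F ∘ A₂ with A₁ a c-affine permutation
and A₂ an affine permutation) have equal c-differential uniformity. -/
theorem c1_equiv_preserves_c_diff_uniformity (p n s : ℕ) (hp : p.Prime) (hn : 0 < n)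
    (hs : 0 < s)
    (K L F0 : Type) [Field K] [Fintype K] [Field L] [Fintype L] [Field F0] [Fintype F0]
    (hK : Fintype.card K = p ^ n) (hL : Fintype.card L = p ^ s)
    (hF0 : Fintype.card F0 = p ^ (Nat.gcd n s))
    (ι : F0 →+* K) (κ : F0 →+* L) (c : F0) (hc : c ≠ 0)
    (F F' : K → L)
    (A₁ : L → L) (hA₁bij : Function.Bijective A₁)
    (hA₁add : ∀ x y : L, A₁ (x + y) - A₁ 0 = (A₁ x - A₁ 0) + (A₁ y - A₁ 0))
    (hA₁c : ∀ x : L, A₁ (κ c * x) - A₁ 0 = κ c * (A₁ x - A₁ 0))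
    (A₂ : K → K) (hA₂bij : Function.Bijective A₂)
    (hA₂add : ∀ x y : K, A₂ (x + y) - A₂ 0 = (A₂ x - A₂ 0) + (A₂ y - A₂ 0))
    (hF' : ∀ x : K, F' x = A₁ (F (A₂ x))) :
    sSup {m : ℕ | ∃ (a : K) (b : L), (c = 1 → a ≠ 0) ∧
        m = Nat.card {x : K // F (x + a) - κ c * F x = b}} =
    sSup {m : ℕ | ∃ (a : K) (b : L), (c = 1 → a ≠ 0) ∧
        m = Nat.card {x : K // F' (x + a) - κ c * F' x = b}} := by
  set γ := κ c with hγ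
  have hA2 : ∀ x a : K, A₂ (x + a) = A₂ x + (A₂ a - A₂ 0) := by
    intro x a
    linear_combination hA₂add x a
  have hA1neg : ∀ v : L, A₁ (-v) - A₁ 0 = -(A₁ v - A₁ 0) := by
    intro v
    have h := hA₁add v (-v)
    rw [add_neg_cancel] at h
    linear_combination -h
  have key : ∀ u v : L, A₁ (u - γ * v) = A₁ u - γ * A₁ v + γ * A₁ 0 := by
    intro u v
    rw [sub_eq_add_neg]
    have h1 := hA₁add u (-(γ * v))
    have h2 := hA1neg (γ * v)
    have h3 := hA₁c v
    linear_combination h1 + h2 - h3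
  set e₁ := Equiv.ofBijective A₁ hA₁bij with he₁
  set e₂ := Equiv.ofBijective A₂ hA₂bij with he₂
  have hA₁eq : ∀ t w : L, A₁ t = w ↔ t = e₁.symm w := by
    intro t w
    rw [← Equiv.ofBijective_apply A₁ hA₁bij, ← he₁, Equiv.apply_eq_iff_eq_symm_apply]
  have core : ∀ (a : K) (b : L),
      Nat.card {x : K // F' (x + a) - γ * F' x = b} =
      Nat.card {y : K // F (y + (A₂ a - A₂ 0)) - γ * F y = e₁.symm (b + γ * A₁ 0)} := by
    intro a b
    apply Nat.card_congr
    refine Equiv.subtypeEquiv e₂ ?_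
    intro x
    show F' (x + a) - γ * F' x = b ↔ _
    have he₂x : e₂ x = A₂ x := rfl
    rw [he₂x, hF', hF', hA2 x a, ← hA₁eq, key]
    constructor <;> intro h <;> linear_combination h
  congr 1
  ext m
  simp only [Set.mem_setOf_eq]
  constructor
  · rintro ⟨a, b, hcond, rfl⟩
    obtain ⟨a', ha'⟩ := hA₂bij.surjective (a + A₂ 0)
    refine ⟨a', A₁ b - γ * A₁ 0, ?_, ?_⟩
    · intro h1 ha'0
      apply hcond h1
      rw [ha'0] at ha'
      linear_combination -ha'
    · rw [core a' (A₁ b - γ * A₁ 0)]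
      have h1 : A₂ a' - A₂ 0 = a := by rw [ha']; ring
      have h2 : e₁.symm (A₁ b - γ * A₁ 0 + γ * A₁ 0) = b := by
        rw [sub_add_cancel]
        exact e₁.symm_apply_apply b
      rw [h1, h2]
  · rintro ⟨a, b, hcond, rfl⟩
    refine ⟨A₂ a - A₂ 0, e₁.symm (b + γ * A₁ 0), ?_, ?_⟩
    · intro h1 h0
      apply hcond h1
      apply hA₂bij.injective
      rw [sub_eq_zero] at h0
      exact h0
    · rw [core]
end

section
/- Let q = p^n, t | s, c ∈ F_{q^t}^×, and F : F_{q^s} → F_{q^s}. Let u, v ∈ F_{q^s} with Tr_{F_{q^s}/F_{q^t}}(−uv) ≠ 1, and define G(x) = F(x) + u·Tr_{F_{q^s}/F_{q^t}}(vF(x)). Then the map h(x) = x + u·Tr_{F_{q^s}/F_{q^t}}(vx) is an F_{q^t}-linear permutation of F_{q^s}, and G = h ∘ F has the same cc-differential uniformity as F; in particular, if F is PccN then so is G. -/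
/-- h(x) = x + u·Tr(vx) is an F_{q^t}-linear permutation of F_{q^s} when
Tr(−uv) ≠ 1, and G(x) = F(x) + u·Tr(vF(x)) has the same cc-differential uniformity as F. -/
theorem trace_perturbation_preserves_cc (p n t s : ℕ) (hp : p.Prime) (hn : 0 < n)
    (ht : 0 < t) (hts : t ∣ s)
    (T E : Type) [Field T] [Fintype T] [Field E] [Fintype E] [Algebra T E]
    (hT : Fintype.card T = (p ^ n) ^ t) (hE : Fintype.card E = (p ^ n) ^ s)
    (c : T) (hc : c ≠ 0)
    (F : E → E) (u v : E)
    (huv : Algebra.trace T E (-(u * v)) ≠ 1)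
    (G : E → E) (hG : ∀ x, G x = F x + u * algebraMap T E (Algebra.trace T E (v * F x)))
    (h : E → E) (hh : ∀ x, h x = x + u * algebraMap T E (Algebra.trace T E (v * x))) :
    (Function.Bijective h ∧ (∀ x y : E, h (x + y) = h x + h y) ∧
      ∀ (t₀ : T) (x : E), h (t₀ • x) = t₀ • h x) ∧
    sSup {m : ℕ | ∃ a b : E, (algebraMap T E c = 1 → a ≠ 0) ∧
        m = Nat.card {x : E // G (algebraMap T E c * x + a) - algebraMap T E c * G x = b}} =
    sSup {m : ℕ | ∃ a b : E, (algebraMap T E c = 1 → a ≠ 0) ∧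
        m = Nat.card {x : E // F (algebraMap T E c * x + a) - algebraMap T E c * F x = b}} := by
  have hadd : ∀ x y : E, h (x + y) = h x + h y := by
    intro x y
    simp only [hh, mul_add, map_add]
    ring
  have hsmul : ∀ (t₀ : T) (x : E), h (t₀ • x) = t₀ • h x := by
    intro t₀ x
    simp only [hh, Algebra.smul_def]
    have hv : v * (algebraMap T E t₀ * x) = t₀ • (v * x) := by
      rw [Algebra.smul_def]; ring
    rw [hv, map_smul, smul_eq_mul, map_mul]
    ring
  have hker : ∀ x : E, h x = 0 → x = 0 := by
    intro x hx
    rw [hh] at hx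
    set τ := Algebra.trace T E (v * x) with hτ
    have hx' : x = -(u * algebraMap T E τ) := by linear_combination hx
    have hvx : v * x = τ • (-(u * v)) := by
      rw [hx', Algebra.smul_def]; ring
    have heq : τ * 1 = τ * Algebra.trace T E (-(u * v)) := by
      rw [mul_one]
      conv_lhs => rw [hτ, hvx, map_smul, smul_eq_mul]
    have hτ0 : τ = 0 := by
      by_contra hne
      exact huv (mul_left_cancel₀ hne heq).symm
    rw [hx', hτ0]
    simp
  have hinj : Function.Injective h := by
    intro x y hxy
    have hsub : h (x - y) = 0 := by
      have h2 := hadd (x - y) y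
      rw [sub_add_cancel, hxy] at h2
      linear_combination -h2
    exact sub_eq_zero.mp (hker _ hsub)
  have hbij : Function.Bijective h := Finite.injective_iff_bijective.mp hinj
  refine ⟨⟨hbij, hadd, hsmul⟩, ?_⟩
  have hmul : ∀ x : E, h (algebraMap T E c * x) = algebraMap T E c * h x := by
    intro x
    have := hsmul c x
    rwa [Algebra.smul_def, Algebra.smul_def] at this
  have hmain : ∀ x a : E,
      G (algebraMap T E c * x + a) - algebraMap T E c * G x
        = h (F (algebraMap T E c * x + a) - algebraMap T E c * F x) := by
    intro x a
    have h2 : h (F (algebraMap T E c * x + a) - algebraMap T E c * F x)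
        = h (F (algebraMap T E c * x + a)) - h (algebraMap T E c * F x) := by
      have h3 := hadd (F (algebraMap T E c * x + a) - algebraMap T E c * F x)
        (algebraMap T E c * F x)
      rw [sub_add_cancel] at h3
      linear_combination -h3
    rw [h2, hmul, hG, hG, hh, hh]
  have hcard : ∀ (a b' : E),
      Nat.card {x : E // G (algebraMap T E c * x + a) - algebraMap T E c * G x = h b'}
        = Nat.card {x : E // F (algebraMap T E c * x + a) - algebraMap T E c * F x = b'} := by
    intro a b'
    apply Nat.card_congr
    apply Equiv.subtypeEquivRight
    intro x
    rw [hmain]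
    exact ⟨fun hx => hinj hx, fun hx => by rw [hx]⟩
  have hset : {m : ℕ | ∃ a b : E, (algebraMap T E c = 1 → a ≠ 0) ∧
        m = Nat.card {x : E // G (algebraMap T E c * x + a) - algebraMap T E c * G x = b}}
      = {m : ℕ | ∃ a b : E, (algebraMap T E c = 1 → a ≠ 0) ∧
        m = Nat.card {x : E // F (algebraMap T E c * x + a) - algebraMap T E c * F x = b}} := by
    ext m
    constructor
    · rintro ⟨a, b, hP, rfl⟩
      obtain ⟨b', rfl⟩ := hbij.surjective b
      exact ⟨a, b', hP, hcard a b'⟩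
    · rintro ⟨a, b', hP, rfl⟩
      exact ⟨a, h b', hP, (hcard a b').symm⟩
  rw [hset]
end

section
/- Let p be any prime, m ≥ 1, d = p^m + 1, and c ∈ F_{p^{gcd(m,n)}}^× with c ≠ 1, viewed inside F_{p^n}. Then for all x ∈ F_{p^n}: (cx+1)^d − c x^d = (c² − c)·(x + 1/(c−1))^d + 1/(1−c). Consequently the cc-differential uniformity of F(x) = x^d on F_{p^n} equals gcd(d, p^n − 1). -/
/-- for d = p^m + 1 and c ≠ 1 in F_{p^{gcd(m,n)}}^×,
(cx+1)^d − c x^d = (c²−c)(x + 1/(c−1))^d + 1/(1−c), and the cc-differential uniformity of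
x^d on F_{p^n} equals gcd(d, p^n − 1). -/
theorem gold_cc_uniformity (p n m : ℕ) (hp : p.Prime) (hn : 0 < n) (hm : 0 < m)
    (K : Type) [Field K] [Fintype K] (hK : Fintype.card K = p ^ n)
    (c : K) (hc0 : c ≠ 0) (hc1 : c ≠ 1) (hcsub : c ^ p ^ (Nat.gcd m n) = c) :
    (∀ x : K, (c * x + 1) ^ (p ^ m + 1) - c * x ^ (p ^ m + 1) =
      (c ^ 2 - c) * (x + 1 / (c - 1)) ^ (p ^ m + 1) + 1 / (1 - c)) ∧
    sSup {N : ℕ | ∃ a b : K,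
        N = Nat.card {x : K // (c * x + a) ^ (p ^ m + 1) - c * x ^ (p ^ m + 1) = b}} =
    Nat.gcd (p ^ m + 1) (p ^ n - 1) := by
  classical
  haveI := Fact.mk hp
  have hchar : CharP K p := by
    haveI h1 : CharP K (ringChar K) := ringChar.charP K
    obtain ⟨k, hk, hcard⟩ := FiniteField.card K (ringChar K)
    have hr : ringChar K = p := by
      have hdvd : ringChar K ∣ p ^ n := by
        rw [← hK, hcard]; exact dvd_pow_self _ k.pos.ne'
      exact (Nat.prime_dvd_prime_iff_eq hk hp).mp (hk.dvd_of_dvd_pow hdvd)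
    rwa [hr] at h1
  haveI := hchar
  haveI : ExpChar K p := inferInstance
  have hcm : c ^ p ^ m = c := by
    obtain ⟨t, ht⟩ := Nat.gcd_dvd_left m n
    have key : ∀ s : ℕ, c ^ p ^ (Nat.gcd m n * s) = c := by
      intro s
      induction s with
      | zero => simp
      | succ s ih => rw [Nat.mul_succ, pow_add, pow_mul, ih, hcsub]
    rw [ht, key t]
  have hc1' : c - 1 ≠ 0 := sub_ne_zero.mpr hc1
  have h1c : (1 : K) - c ≠ 0 := fun h => hc1 (sub_eq_zero.mp h).symm
  have he : ((c - 1)⁻¹ : K) ^ p ^ m = (c - 1)⁻¹ := by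
    rw [inv_pow, sub_pow_char_pow, hcm, one_pow]
  set d : ℕ := p ^ m + 1 with hd
  have hid : ∀ a x : K, (c * x + a) ^ d - c * x ^ d =
      (c ^ 2 - c) * (x + a * (c - 1)⁻¹) ^ d +
        (a ^ d - (c ^ 2 - c) * (a * (c - 1)⁻¹) ^ d) := by
    intro a x
    have e1 : (c * x + a) ^ d = (c * x ^ p ^ m + a ^ p ^ m) * (c * x + a) := by
      rw [hd, pow_succ, add_pow_char_pow, mul_pow, hcm]
    have e2 : (x + a * (c - 1)⁻¹) ^ d =
        (x ^ p ^ m + a ^ p ^ m * (c - 1)⁻¹) * (x + a * (c - 1)⁻¹) := by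
      rw [hd, pow_succ, add_pow_char_pow, mul_pow, he]
    have e3 : (a * (c - 1)⁻¹) ^ d = (a ^ p ^ m * (c - 1)⁻¹) * (a * (c - 1)⁻¹) := by
      rw [hd, pow_succ, mul_pow, he]
    rw [hd, pow_succ x, ← hd, e1, e2, e3]
    field_simp
    ring
  have hd0 : d ≠ 0 := Nat.succ_ne_zero _
  have hA : c ^ 2 - c ≠ 0 := by
    have h : c ^ 2 - c = c * (c - 1) := by ring
    rw [h]; exact mul_ne_zero hc0 hc1'
  constructor
  · intro x
    have e4 : ((c - 1)⁻¹ : K) ^ d = (c - 1)⁻¹ * (c - 1)⁻¹ := by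
      rw [hd, pow_succ, he]
    have hconst : (1 : K) ^ d - (c ^ 2 - c) * ((1 : K) * (c - 1)⁻¹) ^ d = 1 / (1 - c) := by
      rw [one_mul, e4, one_pow]
      field_simp
      ring
    rw [hid 1 x, hconst, one_mul, one_div, one_div]
  · have hq1pos : 0 < p ^ n - 1 := by
      have h2 : 1 < p ^ n := Nat.one_lt_pow hn.ne' hp.one_lt
      omega
    set g : ℕ := Nat.gcd d (p ^ n - 1) with hg
    have hgpos : 0 < g := Nat.gcd_pos_of_pos_right _ hq1pos
    obtain ⟨ζ, hζ⟩ := IsCyclic.exists_generator (α := Kˣ)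
    have hordζ : orderOf ζ = p ^ n - 1 := by
      rw [orderOf_eq_card_of_forall_mem_zpowers hζ, Nat.card_eq_fintype_card, Fintype.card_units, hK]
    have hprim : IsPrimitiveRoot ζ (p ^ n - 1) := by
      rw [← hordζ]; exact IsPrimitiveRoot.orderOf ζ
    obtain ⟨t, ht⟩ := (Nat.gcd_dvd_right d (p ^ n - 1) : g ∣ p ^ n - 1)
    have hprimg : IsPrimitiveRoot (ζ ^ t) g :=
      hprim.pow hq1pos (by rw [ht, mul_comm])
    have hprimK : IsPrimitiveRoot ((ζ ^ t : Kˣ) : K) g :=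
      IsPrimitiveRoot.coe_units_iff.mpr hprimg
    have hcount1 : Nat.card {y : K // y ^ g = 1} = g := by
      have hfs : (Finset.univ.filter (fun y : K => y ^ g = 1)) = Polynomial.nthRootsFinset g (1 : K) := by
        ext x
        simp [Polynomial.mem_nthRootsFinset hgpos]
      rw [Nat.card_eq_fintype_card, Fintype.card_subtype, hfs, hprimK.card_nthRootsFinset]
    have hdg : ∀ y : K, y ^ d = 1 ↔ y ^ g = 1 := by
      intro y
      constructor
      · intro hy
        have hy0 : y ≠ 0 := by
          intro h; rw [h, zero_pow hd0] at hy; exact zero_ne_one hy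
        have h2 : y ^ (p ^ n - 1) = 1 := by
          rw [← hK]; exact FiniteField.pow_card_sub_one_eq_one y hy0
        exact orderOf_dvd_iff_pow_eq_one.mp
          (Nat.dvd_gcd (orderOf_dvd_of_pow_eq_one hy) (orderOf_dvd_of_pow_eq_one h2))
      · intro hy
        obtain ⟨s, hs⟩ := Nat.gcd_dvd_left d (p ^ n - 1)
        rw [hs, pow_mul, hy, one_pow]
    have hcountd1 : Nat.card {y : K // y ^ d = 1} = g := by
      rw [Nat.card_congr (Equiv.subtypeEquivRight hdg), hcount1]
    have hcount_le : ∀ w : K, Nat.card {y : K // y ^ d = w} ≤ g := by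
      intro w
      by_cases hw : ∃ y0 : K, y0 ^ d = w
      · obtain ⟨y0, hy0⟩ := hw
        by_cases hw0 : w = 0
        · have hiff : ∀ y : K, y ^ d = w ↔ y = 0 := by
            intro y; subst hw0; exact pow_eq_zero_iff hd0
          rw [Nat.card_congr (Equiv.subtypeEquivRight hiff)]
          have hone : Nat.card {y : K // y = 0} = 1 := by
            haveI : Unique {y : K // y = 0} := ⟨⟨⟨0, rfl⟩⟩, fun y => Subtype.ext y.2⟩
            simp
          rw [hone]; exact hgpos
        · have hy00 : y0 ≠ 0 := by
            intro h; apply hw0; rw [← hy0, h, zero_pow hd0]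
          have key : ∀ y : K, y ^ d = w ↔ (y * y0⁻¹) ^ d = 1 := by
            intro y
            rw [mul_pow, inv_pow, hy0, ← div_eq_mul_inv, (IsUnit.div_eq_one_iff_eq (Ne.isUnit hw0))]
          rw [Nat.card_congr (((Equiv.subtypeEquivRight key).trans
            (Equiv.subtypeEquiv (Equiv.mulRight₀ y0⁻¹ (inv_ne_zero hy00))
              (fun y => Iff.rfl))) : {y : K // y ^ d = w} ≃ {u : K // u ^ d = 1})]
          rw [hcountd1]
      · have : IsEmpty {y : K // y ^ d = w} := ⟨fun ⟨y, hy⟩ => hw ⟨y, hy⟩⟩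
        simp [Nat.card_of_isEmpty]
    have hcard_ab : ∀ a b : K, Nat.card {x : K // (c * x + a) ^ d - c * x ^ d = b} =
        Nat.card {y : K // y ^ d =
          (b - (a ^ d - (c ^ 2 - c) * (a * (c - 1)⁻¹) ^ d)) / (c ^ 2 - c)} := by
      intro a b
      have h1 : ∀ x : K, ((c * x + a) ^ d - c * x ^ d = b) ↔
          ((x + a * (c - 1)⁻¹) ^ d =
            (b - (a ^ d - (c ^ 2 - c) * (a * (c - 1)⁻¹) ^ d)) / (c ^ 2 - c)) := by
        intro x
        rw [hid a x, eq_div_iff hA]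
        constructor
        · intro h; linear_combination h
        · intro h; linear_combination h
      exact Nat.card_congr ((Equiv.subtypeEquivRight h1).trans
        (Equiv.subtypeEquiv (Equiv.addRight (a * (c - 1)⁻¹)) (fun x => Iff.rfl)))
    apply le_antisymm
    · apply csSup_le
      · exact ⟨_, 0, (0 : K), rfl⟩
      · rintro N ⟨a, b, rfl⟩
        rw [hcard_ab]
        exact hcount_le _
    · apply le_csSup
      · refine ⟨g, ?_⟩
        rintro N ⟨a, b, rfl⟩
        rw [hcard_ab]
        exact hcount_le _
      · refine ⟨0, ((0 : K) ^ d - (c ^ 2 - c) * ((0 : K) * (c - 1)⁻¹) ^ d) + (c ^ 2 - c), ?_⟩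
        rw [hcard_ab, add_sub_cancel_left, div_self hA, hcountd1]
end

section
/- Let p be an odd prime, n a positive integer, c = −1 ∈ F_{p^n}, and F : F_{p^n} → F_{p^n}. If a, b ∈ F_{p^n} satisfy b ≠ 2F(a/2), then the number of solutions x of F(a − x) + F(x) = b is even. -/
theorem even_card_of_involution {α : Type*} [Fintype α] (f : α → α)
    (hf : Function.Involutive f) (hfix : ∀ x, f x ≠ x) : Even (Nat.card α) := by
  classical
  haveI : Fact (Nat.Prime 2) := ⟨Nat.prime_two⟩
  set σ : Equiv.Perm α := hf.toPerm
  have hσ2 : σ ^ 2 = 1 := by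
    ext x
    simp [σ, pow_succ, Function.Involutive.toPerm, hf x]
  have hpg : IsPGroup 2 (Subgroup.zpowers σ) := by
    intro g
    refine ⟨1, ?_⟩
    have : (g : Equiv.Perm α) ^ 2 = 1 := by
      obtain ⟨n, hn⟩ := g.2
      rw [← hn, ← zpow_natCast, ← zpow_mul, mul_comm, zpow_mul, zpow_natCast, hσ2]
      simp
    exact Subtype.ext (by simpa using this)
  have hfix' : MulAction.fixedPoints (Subgroup.zpowers σ) α = ∅ := by
    ext x
    simp only [Set.mem_empty_iff_false, iff_false, MulAction.mem_fixedPoints]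
    intro h
    exact hfix x (h ⟨σ, Subgroup.mem_zpowers σ⟩)
  have hmod := hpg.card_modEq_card_fixedPoints α
  rw [hfix'] at hmod
  have h0 : Nat.card (∅ : Set α) = 0 := by simp
  rw [h0] at hmod
  obtain ⟨k, hk⟩ := (Nat.modEq_zero_iff_dvd.mp hmod)
  exact ⟨k, by omega⟩

/-- for p odd, c = −1, if b ≠ 2F(a/2) then the number of solutions of
F(a−x) + F(x) = b is even. -/
theorem cc_neg_one_count_even (p n : ℕ) (hp : p.Prime) (hodd : p ≠ 2) (hn : 0 < n)
    (K : Type) [Field K] [Fintype K] (hK : Fintype.card K = p ^ n)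
    (F : K → K) (a b : K) (hb : b ≠ 2 * F (a / 2)) :
    Even (Nat.card {x : K // F (a - x) + F x = b}) := by
  classical
  have hpK : (p : K) = 0 := by
    have := FiniteField.cast_card_eq_zero K
    rw [hK] at this
    push_cast at this
    exact pow_eq_zero_iff hn.ne' |>.mp this
  have h2 : (2 : K) ≠ 0 := by
    intro h2
    set q := ringChar K with hq
    haveI : CharP K q := ringChar.charP K
    have hq2 : q ∣ 2 := by
      have := (CharP.cast_eq_zero_iff K q 2).mp (by exact_mod_cast h2)
      exact this
    have hqp : q ∣ p := (CharP.cast_eq_zero_iff K q p).mp hpK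
    have hq1 : q ≠ 1 := CharP.ringChar_ne_one
    rcases (Nat.prime_two.eq_one_or_self_of_dvd q hq2) with h | h
    · exact hq1 h
    · rw [h] at hqp
      exact hodd ((Nat.prime_dvd_prime_iff_eq Nat.prime_two hp).mp hqp).symm
  refine even_card_of_involution
    (fun x => ⟨a - x.1, by have := x.2; rw [sub_sub_cancel]; linear_combination this⟩) ?_ ?_
  · intro x
    ext
    simp [sub_sub_cancel]
  · rintro ⟨x, hx⟩ h
    have hax : a - x = x := congrArg Subtype.val h
    have hx2 : x = a / 2 := by field_simp; linear_combination -hax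
    apply hb
    rw [hx2] at hx
    rw [← hx]
    have haa : a - a / 2 = a / 2 := by field_simp; ring
    rw [haa]; ring
end

section
/- Let m ≥ 4 be even and gcd(m, i) = 1, and work over F_{2^m}. Define F₁(x) = x + Tr(x^{2^i+1}) where Tr is the absolute trace from F_{2^m} to F_2. Then F₁ is an involution: F₁(F₁(x)) = x for all x ∈ F_{2^m}. -/
/-- over F_{2^m} with m ≥ 4 even and gcd(m,i) = 1, the map
F₁(x) = x + Tr(x^(2^i+1)) is an involution. -/
theorem F1_involution (m i : ℕ) (hm : 4 ≤ m) (hme : Even m) (hgcd : Nat.gcd m i = 1)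
    (K : Type) [Field K] [Fintype K] (hK : Fintype.card K = 2 ^ m)
    (Tr : K → K) (hTr : ∀ y : K, Tr y = ∑ j ∈ Finset.range m, y ^ 2 ^ j)
    (F₁ : K → K) (hF₁ : ∀ x : K, F₁ x = x + Tr (x ^ (2 ^ i + 1))) :
    ∀ x : K, F₁ (F₁ x) = x := by
  -- characteristic 2
  have hchar : CharP K 2 := by
    have hc := ringChar.charP K
    obtain ⟨n, hp, hcard⟩ := FiniteField.card K (ringChar K)
    have : ringChar K = 2 := by
      have hdvd : ringChar K ∣ 2 ^ m := by
        rw [← hK, hcard]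
        exact dvd_pow_self _ (by positivity)
      have := hp.dvd_of_dvd_pow hdvd
      exact (Nat.prime_dvd_prime_iff_eq hp Nat.prime_two).mp this
    exact this ▸ hc
  haveI := hchar
  haveI : Fact (Nat.Prime 2) := ⟨Nat.prime_two⟩
  have h2 : (2 : K) = 0 := by exact_mod_cast CharP.cast_eq_zero K 2
  have hmpos : 0 < m := by omega
  -- frobenius fixed points: y ^ card = y
  have hpowcard : ∀ y : K, y ^ 2 ^ m = y := by
    intro y; rw [← hK]; exact FiniteField.pow_card y
  -- Tr y squared = Tr (y^2)
  have trsq_eq : ∀ y : K, (Tr y) ^ 2 = Tr (y ^ 2) := by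
    intro y
    rw [hTr, hTr, sum_pow_char]
    apply Finset.sum_congr rfl
    intro j _
    rw [← pow_mul, ← pow_mul]
    ring_nf
  -- Tr(y^2) = Tr y
  have trfrob : ∀ y : K, Tr (y ^ 2) = Tr y := by
    intro y
    rw [← trsq_eq, hTr]
    rw [sum_pow_char]
    have h1 : ∀ j ∈ Finset.range m, (y ^ 2 ^ j) ^ 2 = y ^ 2 ^ (j + 1) := by
      intro j _; rw [← pow_mul, pow_succ]
    rw [Finset.sum_congr rfl h1]
    have h2' : ∑ j ∈ Finset.range m, y ^ 2 ^ (j + 1)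
        = (∑ j ∈ Finset.range (m + 1), y ^ 2 ^ j) - y ^ 2 ^ 0 := by
      rw [Finset.sum_range_succ' (fun j => y ^ 2 ^ j) m]
      ring
    rw [h2', Finset.sum_range_succ, hpowcard]
    simp
  -- Tr y is in F_2
  have trsq : ∀ y : K, (Tr y) ^ 2 = Tr y := by
    intro y; rw [trsq_eq, trfrob]
  -- additivity
  have tradd : ∀ a b : K, Tr (a + b) = Tr a + Tr b := by
    intro a b
    rw [hTr, hTr, hTr, ← Finset.sum_add_distrib]
    apply Finset.sum_congr rfl
    intro j _
    exact add_pow_char_pow a b 2 j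
  -- idempotents are fixed by frobenius powers
  have hidem : ∀ c : K, c ^ 2 = c → ∀ j : ℕ, c ^ 2 ^ j = c := by
    intro c hc j
    induction j with
    | zero => simp
    | succ n ih => rw [pow_succ, pow_mul, ih, hc]
  -- Tr of multiples by an element of F_2
  have trmul : ∀ c y : K, c ^ 2 = c → Tr (c * y) = c * Tr y := by
    intro c y hc
    rw [hTr, hTr, Finset.mul_sum]
    apply Finset.sum_congr rfl
    intro j _
    rw [mul_pow, hidem c hc]
  -- Tr 1 = 0 since m is even
  have trone : Tr (1 : K) = 0 := by
    rw [hTr]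
    simp only [one_pow, Finset.sum_const, Finset.card_range, nsmul_eq_mul, mul_one]
    obtain ⟨k, hk⟩ := hme
    have : ((m : ℕ) : K) = (k : K) * 2 := by
      rw [hk]; push_cast; ring
    rw [this, h2, mul_zero]
  -- Tr(x^(2^i)) = Tr x
  have trfrobpow : ∀ x : K, Tr (x ^ 2 ^ i) = Tr x := by
    intro x
    clear hF₁ hgcd
    induction i with
    | zero => simp
    | succ n ih =>
      have : x ^ 2 ^ (n + 1) = (x ^ 2 ^ n) ^ 2 := by
        rw [← pow_mul, pow_succ]
      rw [this, trfrob, ih]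
  intro x
  set t := Tr (x ^ (2 ^ i + 1)) with ht
  have htsq : t ^ 2 = t := trsq _
  rw [hF₁, hF₁]
  -- expand (x + t) ^ (2^i + 1)
  have hexp : (x + t) ^ (2 ^ i + 1)
      = x ^ (2 ^ i + 1) + t * (x ^ 2 ^ i + x) + t * 1 := by
    rw [pow_succ, add_pow_char_pow (x := x) (y := t)]
    rw [hidem t htsq i]
    linear_combination htsq
  rw [hexp, tradd, tradd, trmul t _ htsq, trmul t _ htsq, tradd, trfrobpow, trone, ← ht]
  have : Tr x + Tr x = 0 := by
    have : (2 : K) * Tr x = 0 := by rw [h2, zero_mul]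
    linear_combination this
  have ht2 : t + t = 0 := by
    have h2t : (2 : K) * t = 0 := by rw [h2, zero_mul]
    linear_combination h2t
  rw [this]
  linear_combination ht2
end
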